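/- Let $X_n$ be a random walk on $\mathbb{Z}^2$ whose transition probabilities satisfy $p(i,0,x)\le c/i$ for all $i\ge1$. Then for every $b\in(0,2)$ there is a constant $c_b$ such that $E[(1+|X_i|^2)^{-b/2}] \le c_b\, i^{-b/2}$ for all $i\ge1$. -/

import Mathlib

open MeasureTheory

/-- Euclidean norm of a point of `ℤ × ℤ`. -/
noncomputable def znorm (x : ℤ × ℤ) : ℝ := Real.sqrt ((x.1 : ℝ) ^ 2 + (x.2 : ℝ) ^ 2)


lemma sum_rpow_le_aux {a : ℝ} (ha0 : 0 < a) (ha1 : a < 1) (N : ℕ) :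
    ∑ k ∈ Finset.range N, ((k : ℝ) + 1) ^ (-a) ≤ (N : ℝ) ^ (1 - a) / (1 - a) := by
  have h1a : 0 < 1 - a := by linarith
  induction N with
  | zero => simp [Real.zero_rpow (by linarith : (1:ℝ) - a ≠ 0)]
  | succ N ih =>
      rw [Finset.sum_range_succ]
      have hN1 : (0:ℝ) < (N:ℝ) + 1 := by positivity
      have key : (1 - a) * ((N : ℝ) + 1) ^ (-a) ≤ ((N:ℝ)+1) ^ (1-a) - (N:ℝ) ^ (1-a) := by
        have hbern : (1 + (-(1/((N:ℝ)+1)))) ^ (1-a) ≤ 1 + (1-a) * (-(1/((N:ℝ)+1))) :=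
          rpow_one_add_le_one_add_mul_self (by
            rw [neg_le, neg_neg]
            rw [div_le_one hN1]; linarith [Nat.cast_nonneg (α := ℝ) N]) h1a.le
            (by linarith)
        have hsimp : 1 + (-(1/((N:ℝ)+1))) = (N:ℝ)/((N:ℝ)+1) := by field_simp; ring
        rw [hsimp] at hbern
        have hmul : ((N:ℝ)/((N:ℝ)+1)) ^ (1-a) * ((N:ℝ)+1) ^ (1-a) = (N:ℝ) ^ (1-a) := by
          rw [← Real.mul_rpow (by positivity) hN1.le]
          congr 1; field_simp
        have h2 : (N:ℝ) ^ (1-a) ≤ (1 + (1-a) * (-(1/((N:ℝ)+1)))) * ((N:ℝ)+1) ^ (1-a) := by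
          rw [← hmul]
          exact mul_le_mul_of_nonneg_right hbern (Real.rpow_nonneg hN1.le _)
        have h3 : (1 + (1-a) * (-(1/((N:ℝ)+1)))) * ((N:ℝ)+1) ^ (1-a)
            = ((N:ℝ)+1) ^ (1-a) - (1-a) * (((N:ℝ)+1) ^ (1-a) / ((N:ℝ)+1)) := by ring
        have h4 : ((N:ℝ)+1) ^ (1-a) / ((N:ℝ)+1) = ((N:ℝ)+1) ^ (-a) := by
          have hpos := Real.rpow_pos_of_pos hN1 a
          rw [Real.rpow_sub hN1, Real.rpow_one, Real.rpow_neg hN1.le]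
          field_simp
        rw [h3, h4] at h2
        linarith
      push_cast
      calc ∑ k ∈ Finset.range N, ((k : ℝ) + 1) ^ (-a) + ((N:ℝ)+1) ^ (-a)
          ≤ (N : ℝ) ^ (1 - a) / (1 - a) + ((N:ℝ)+1) ^ (-a) := by linarith
        _ ≤ ((N:ℝ)+1) ^ (1-a) / (1-a) := by
            rw [div_add' _ _ _ (ne_of_gt h1a), div_le_div_iff₀ h1a h1a]
            nlinarith [key, h1a]


lemma sum_Icc_le {b : ℝ} (hb0 : 0 < b) (hb2 : b < 2) (N : ℕ) (hN : 1 ≤ N) :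
    ∑ k ∈ Finset.Icc (-(N:ℤ)) (N:ℤ), (1+(k:ℝ)^2) ^ (-(b/4))
      ≤ (2*(1+1/(1-b/2))) * (N:ℝ)^(1-b/2) := by
  set F : ℕ → ℝ := fun m => (1+(m:ℝ)^2) ^ (-(b/4)) with hF
  have hcast : ∀ k : ℤ, (1+(k:ℝ)^2) ^ (-(b/4)) = F k.natAbs := by
    intro k
    simp only [hF]
    congr 2
    rw [Nat.cast_natAbs]
    push_cast
    rw [sq_abs]
  rw [Finset.sum_congr rfl (fun k _ => hcast k)]
  have hmaps : ∀ k ∈ Finset.Icc (-(N:ℤ)) (N:ℤ), k.natAbs ∈ Finset.range (N+1) := by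
    intro k hk
    rw [Finset.mem_Icc] at hk
    rw [Finset.mem_range]
    omega
  rw [← Finset.sum_fiberwise_of_maps_to hmaps (fun k => F k.natAbs)]
  have hFnonneg : ∀ m, 0 ≤ F m := fun m => Real.rpow_nonneg (by positivity) _
  have step1 : ∑ m ∈ Finset.range (N+1),
      (∑ k ∈ (Finset.Icc (-(N:ℤ)) (N:ℤ)).filter (fun k => k.natAbs = m), F k.natAbs)
      ≤ ∑ m ∈ Finset.range (N+1), 2 * F m := by
    apply Finset.sum_le_sum
    intro m _
    have hsub : (Finset.Icc (-(N:ℤ)) (N:ℤ)).filter (fun k => k.natAbs = m)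
        ⊆ {(m:ℤ), -(m:ℤ)} := by
      intro k hk
      rw [Finset.mem_filter] at hk
      simp only [Finset.mem_insert, Finset.mem_singleton]
      omega
    calc ∑ k ∈ (Finset.Icc (-(N:ℤ)) (N:ℤ)).filter (fun k => k.natAbs = m), F k.natAbs
        = ∑ k ∈ (Finset.Icc (-(N:ℤ)) (N:ℤ)).filter (fun k => k.natAbs = m), F m := by
          apply Finset.sum_congr rfl
          intro k hk
          rw [Finset.mem_filter] at hk
          rw [hk.2]
      _ = ((Finset.Icc (-(N:ℤ)) (N:ℤ)).filter (fun k => k.natAbs = m)).card * F m := by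
          rw [Finset.sum_const, nsmul_eq_mul]
      _ ≤ 2 * F m := by
          apply mul_le_mul_of_nonneg_right _ (hFnonneg m)
          have := Finset.card_le_card hsub
          have h2 : ({(m:ℤ), -(m:ℤ)} : Finset ℤ).card ≤ 2 := Finset.card_insert_le _ _ |>.trans (by simp)
          exact_mod_cast this.trans h2
  refine step1.trans ?_
  rw [← Finset.mul_sum, Finset.sum_range_succ']
  have hF0 : F 0 = 1 := by simp [hF]
  have hstep : ∀ m : ℕ, F (m+1) ≤ ((m:ℝ)+1) ^ (-(b/2)) := by
    intro m
    have h1 : (0:ℝ) < ((m:ℝ)+1)^2 := by positivity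
    calc F (m+1) ≤ (((m:ℝ)+1)^2) ^ (-(b/4)) := by
          apply Real.rpow_le_rpow_of_nonpos h1 _ (by linarith)
          push_cast; nlinarith
      _ = ((m:ℝ)+1) ^ (-(b/2)) := by
          rw [← Real.rpow_natCast_mul (by positivity) 2 (-(b/4))]
          norm_num
          ring_nf
  have hsum : ∑ m ∈ Finset.range N, F (m+1) ≤ (N:ℝ)^(1-b/2) / (1-b/2) := by
    calc ∑ m ∈ Finset.range N, F (m+1) ≤ ∑ m ∈ Finset.range N, ((m:ℝ)+1) ^ (-(b/2)) :=
          Finset.sum_le_sum (fun m _ => hstep m)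
      _ ≤ (N:ℝ)^(1-b/2) / (1-b/2) := sum_rpow_le_aux (by linarith) (by linarith) N
  have hone : (1:ℝ) ≤ (N:ℝ)^(1-b/2) := by
    apply Real.one_le_rpow (by exact_mod_cast hN) (by linarith)
  have hpos : (0:ℝ) < 1 - b/2 := by linarith
  calc 2 * (∑ m ∈ Finset.range N, F (m+1) + F 0)
      ≤ 2 * ((N:ℝ)^(1-b/2) / (1-b/2) + (N:ℝ)^(1-b/2)) := by
        rw [hF0]; nlinarith [hsum, hone]
    _ = (2*(1+1/(1-b/2))) * (N:ℝ)^(1-b/2) := by field_simp; ring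

-- pointwise product bound
lemma prod_bound {b : ℝ} (hb0 : 0 < b) (x : ℤ × ℤ) :
    (1 + znorm x ^ 2) ^ (-(b/2))
      ≤ (1+(x.1:ℝ)^2) ^ (-(b/4)) * (1+(x.2:ℝ)^2) ^ (-(b/4)) := by
  have hz : znorm x ^ 2 = (x.1:ℝ)^2 + (x.2:ℝ)^2 := Real.sq_sqrt (by positivity)
  have hA : (0:ℝ) < 1+(x.1:ℝ)^2 := by positivity
  have hB : (0:ℝ) < 1+(x.2:ℝ)^2 := by positivity
  have hS : (0:ℝ) < 1 + znorm x ^ 2 := by rw [hz]; positivity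
  have hkey : (1+(x.1:ℝ)^2) * (1+(x.2:ℝ)^2) ≤ (1 + znorm x ^ 2)^2 := by
    rw [hz]; nlinarith [sq_nonneg ((x.1:ℝ)^2 + (x.2:ℝ)^2), sq_nonneg ((x.1:ℝ)*(x.2:ℝ))]
  have h1 : (1 + znorm x ^ 2) ^ (-(b/2)) = ((1 + znorm x ^ 2)^2) ^ (-(b/4)) := by
    rw [← Real.rpow_natCast_mul hS.le 2 (-(b/4))]
    congr 1
    push_cast
    ring
  rw [h1, ← Real.mul_rpow hA.le hB.le]
  exact Real.rpow_le_rpow_of_nonpos (by positivity) hkey (by linarith)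

-- tsum of singleton masses is 1
lemma mass_tsum {Ω : Type*} [MeasurableSpace Ω] (μ : Measure Ω) [IsProbabilityMeasure μ]
    (Y : Ω → ℤ × ℤ) (hY : Measurable Y) :
    Summable (fun x => (μ {ω | Y ω = x}).toReal) ∧
      ∑' x, (μ {ω | Y ω = x}).toReal = 1 := by
  have hsing : ∀ x : ℤ × ℤ, μ {ω | Y ω = x} = (μ.map Y) {x} := by
    intro x
    rw [Measure.map_apply hY (measurableSet_singleton x)]
    congr 1
  haveI : IsProbabilityMeasure (μ.map Y) := Measure.isProbabilityMeasure_map hY.aemeasurable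
  have htsum : ∑' x : ℤ × ℤ, (μ.map Y) {x} = 1 := by
    rw [← measure_iUnion (fun i j hij => by simp [Set.disjoint_singleton, hij])
      (fun x => measurableSet_singleton x), Set.iUnion_of_singleton, measure_univ]
  constructor
  · simp only [hsing]
    exact ENNReal.summable_toReal (by rw [htsum]; exact ENNReal.one_ne_top)
  · simp only [hsing]
    rw [← ENNReal.tsum_toReal_eq (fun x => measure_ne_top _ _), htsum, ENNReal.toReal_one]

theorem stmt12 {Ω : Type*} [MeasurableSpace Ω] (μ : Measure Ω) [IsProbabilityMeasure μ]
    (X : ℕ → Ω → ℤ × ℤ) (hmeas : ∀ i, Measurable (X i)) (c : ℝ)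
    (hp : ∀ i : ℕ, 1 ≤ i → ∀ x : ℤ × ℤ, (μ {ω | X i ω = x}).toReal ≤ c / i)
    (b : ℝ) (hb0 : 0 < b) (hb2 : b < 2) :
    ∃ cb : ℝ, ∀ i : ℕ, 1 ≤ i →
      ∫ ω, (1 + znorm (X i ω) ^ 2) ^ (-(b / 2)) ∂μ ≤ cb * (i : ℝ) ^ (-(b / 2)) := by
  set g : ℤ × ℤ → ℝ := fun x => (1 + znorm x ^ 2) ^ (-(b/2)) with hg
  have hgnn : ∀ x, 0 ≤ g x := fun x => Real.rpow_nonneg (by positivity) _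
  have hgle1 : ∀ x, g x ≤ 1 := by
    intro x
    apply Real.rpow_le_one_of_one_le_of_nonpos
    · nlinarith [sq_nonneg (znorm x)]
    · linarith
  -- c is positive
  have hc : 0 < c := by
    obtain ⟨hsumm, htsum⟩ := mass_tsum μ (X 1) (hmeas 1)
    by_contra hcle
    push_neg at hcle
    have hzero : ∀ x : ℤ × ℤ, (μ {ω | X 1 ω = x}).toReal = 0 := by
      intro x
      have h1 := hp 1 le_rfl x
      have h2 : (0:ℝ) ≤ (μ {ω | X 1 ω = x}).toReal := ENNReal.toReal_nonneg
      have : c / (1:ℕ) ≤ 0 := by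
        simp only [Nat.cast_one, div_one]; linarith
      linarith
    rw [tsum_congr hzero] at htsum
    simp at htsum
  set K : ℝ := 2*(1+1/(1-b/2)) with hK
  refine ⟨4*K^2*c + 1, ?_⟩
  intro i hi
  have hipos : (0:ℝ) < (i:ℝ) := by exact_mod_cast hi
  obtain ⟨hsumm, htsum⟩ := mass_tsum μ (X i) (hmeas i)
  set μx : ℤ × ℤ → ℝ := fun x => (μ {ω | X i ω = x}).toReal with hμx
  have hμnn : ∀ x, 0 ≤ μx x := fun x => ENNReal.toReal_nonneg
  -- step 1: integral equals tsum
  haveI : IsProbabilityMeasure (μ.map (X i)) :=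
    Measure.isProbabilityMeasure_map (hmeas i).aemeasurable
  have hgmeas : Measurable g := measurable_of_countable g
  have hint : Integrable g (μ.map (X i)) := by
    apply (integrable_const (1:ℝ)).mono' hgmeas.aestronglyMeasurable
    filter_upwards with x
    rw [Real.norm_of_nonneg (hgnn x)]
    exact hgle1 x
  have heq : ∫ ω, (1 + znorm (X i ω) ^ 2) ^ (-(b / 2)) ∂μ = ∑' x, μx x * g x := by
    have h1 : ∫ ω, (1 + znorm (X i ω) ^ 2) ^ (-(b / 2)) ∂μ = ∫ x, g x ∂(μ.map (X i)) :=
      (integral_map (hmeas i).aemeasurable hgmeas.aestronglyMeasurable).symm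
    rw [h1, integral_countable' hint]
    apply tsum_congr
    intro x
    rw [smul_eq_mul]
    congr 2
    rw [measureReal_def, Measure.map_apply (hmeas i) (measurableSet_singleton x)]
    congr 1
  rw [heq]
  -- box setup
  set N : ℕ := ⌈Real.sqrt i⌉₊ with hN
  have hsqrt1 : (1:ℝ) ≤ Real.sqrt i := by
    rw [show (1:ℝ) = Real.sqrt 1 by simp]
    exact Real.sqrt_le_sqrt (by exact_mod_cast hi)
  have hN1 : 1 ≤ N := by
    rw [hN, Nat.one_le_ceil_iff]
    linarith
  set box : Finset (ℤ × ℤ) :=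
    (Finset.Icc (-(N:ℤ)) (N:ℤ)) ×ˢ (Finset.Icc (-(N:ℤ)) (N:ℤ)) with hbox
  set T1 : ℤ × ℤ → ℝ := fun x => if x ∈ box then (c/i) * g x else 0 with hT1
  set T2 : ℤ × ℤ → ℝ := fun x => (i:ℝ)^(-(b/2)) * μx x with hT2
  have hT1nn : ∀ x, 0 ≤ T1 x := by
    intro x
    rw [hT1]
    dsimp only
    split
    · positivity
    · exact le_rfl
  -- membership in box
  have hKpos : (0:ℝ) < K := by
    have h12 : (0:ℝ) < 1 - b/2 := by linarith
    rw [hK]; positivity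
  have hbox_mem : ∀ x : ℤ × ℤ, znorm x ≤ Real.sqrt i → x ∈ box := by
    intro x hx
    have hNr : Real.sqrt i ≤ (N:ℝ) := Nat.le_ceil _
    have h1 : |(x.1:ℝ)| ≤ znorm x := by
      rw [← Real.sqrt_sq_eq_abs]
      exact Real.sqrt_le_sqrt (by nlinarith [sq_nonneg ((x.2:ℝ))])
    have h2 : |(x.2:ℝ)| ≤ znorm x := by
      rw [← Real.sqrt_sq_eq_abs]
      exact Real.sqrt_le_sqrt (by nlinarith [sq_nonneg ((x.1:ℝ))])
    have e1 := abs_le.mp (h1.trans (hx.trans hNr))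
    have e2 := abs_le.mp (h2.trans (hx.trans hNr))
    rw [hbox, Finset.mem_product, Finset.mem_Icc, Finset.mem_Icc]
    constructor
    · constructor <;> [exact_mod_cast e1.1; exact_mod_cast e1.2]
    · constructor <;> [exact_mod_cast e2.1; exact_mod_cast e2.2]
  -- pointwise bound
  have hpoint : ∀ x, μx x * g x ≤ T1 x + T2 x := by
    intro x
    have hT2nn : 0 ≤ T2 x := mul_nonneg (Real.rpow_nonneg hipos.le _) (hμnn x)
    by_cases hx : znorm x ≤ Real.sqrt i
    · have hmem := hbox_mem x hx
      have hle : μx x * g x ≤ T1 x := by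
        rw [hT1]
        dsimp only
        rw [if_pos hmem]
        exact mul_le_mul_of_nonneg_right (hp i hi x) (hgnn x)
      linarith
    · push_neg at hx
      have hgx : g x ≤ (i:ℝ)^(-(b/2)) := by
        rw [hg]
        dsimp only
        apply Real.rpow_le_rpow_of_nonpos hipos _ (by linarith)
        have hsq : Real.sqrt i ^ 2 ≤ znorm x ^ 2 :=
          pow_le_pow_left₀ (Real.sqrt_nonneg _) hx.le 2
        have hs : Real.sqrt i ^ 2 = (i:ℝ) := Real.sq_sqrt hipos.le
        linarith
      have hle : μx x * g x ≤ T2 x := by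
        rw [hT2]
        dsimp only
        rw [mul_comm]
        exact mul_le_mul_of_nonneg_right hgx (hμnn x)
      linarith [hT1nn x]
  -- summabilities
  have hST1 : Summable T1 := summable_of_ne_finset_zero (s := box)
    (fun x hx => if_neg hx)
  have hST2 : Summable T2 := hsumm.mul_left _
  have hSg : Summable (fun x => μx x * g x) :=
    Summable.of_nonneg_of_le (fun x => mul_nonneg (hμnn x) (hgnn x))
      (fun x => mul_le_of_le_one_right (hμnn x) (hgle1 x)) hsumm
  -- sum of T1
  have hT1sum : ∑' x, T1 x = ∑ x ∈ box, (c/(i:ℝ)) * g x := by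
    rw [tsum_eq_sum (s := box) (fun x hx => if_neg hx)]
    exact Finset.sum_congr rfl (fun x hx => if_pos hx)
  have hboxsum : ∑ x ∈ box, g x ≤ K^2 * (N:ℝ)^(2-b) := by
    have hNpos : (0:ℝ) < N := by exact_mod_cast hN1
    have hIccnn : (0:ℝ) ≤ ∑ k ∈ Finset.Icc (-(N:ℤ)) (N:ℤ), (1+(k:ℝ)^2) ^ (-(b/4)) :=
      Finset.sum_nonneg (fun k _ => Real.rpow_nonneg (by positivity) _)
    have hIcc := sum_Icc_le hb0 hb2 N hN1
    calc ∑ x ∈ box, g x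
        ≤ ∑ x ∈ box, (1+(x.1:ℝ)^2) ^ (-(b/4)) * (1+(x.2:ℝ)^2) ^ (-(b/4)) :=
          Finset.sum_le_sum (fun x _ => prod_bound hb0 x)
      _ = (∑ k ∈ Finset.Icc (-(N:ℤ)) (N:ℤ), (1+(k:ℝ)^2) ^ (-(b/4)))
            * (∑ k ∈ Finset.Icc (-(N:ℤ)) (N:ℤ), (1+(k:ℝ)^2) ^ (-(b/4))) := by
          rw [hbox, Finset.sum_product, Finset.sum_mul_sum]
      _ ≤ (K * (N:ℝ)^(1-b/2)) * (K * (N:ℝ)^(1-b/2)) := by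
          apply mul_le_mul hIcc hIcc hIccnn
          positivity
      _ = K^2 * (N:ℝ)^(2-b) := by
          rw [show (2:ℝ)-b = (1-b/2)+(1-b/2) by ring, Real.rpow_add hNpos]
          ring
  have hNle : (N:ℝ) ≤ 2 * Real.sqrt i := by
    have h := Nat.ceil_lt_add_one (Real.sqrt_nonneg (i:ℝ))
    rw [hN]
    linarith
  have hN2b : (N:ℝ)^(2-b) ≤ 4 * (i:ℝ)^(1-b/2) := by
    have h2b : (0:ℝ) ≤ 2-b := by linarith
    have h24 : (2:ℝ)^((2:ℝ)-b) ≤ 4 := by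
      have h1 : (2:ℝ)^((2:ℝ)-b) ≤ 2^(2:ℝ) :=
        Real.rpow_le_rpow_of_exponent_le one_le_two (by linarith)
      have h4 : (2:ℝ)^(2:ℝ) = 4 := by
        rw [show (2:ℝ) = ((2:ℕ):ℝ) from by norm_num, Real.rpow_natCast]
        norm_num
      linarith
    have heq : (Real.sqrt i)^((2:ℝ)-b) = (i:ℝ)^(1-b/2) := by
      rw [Real.sqrt_eq_rpow, ← Real.rpow_mul hipos.le]
      congr 1
      ring
    have hinn : 0 ≤ (i:ℝ)^(1-b/2) := Real.rpow_nonneg hipos.le _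
    calc (N:ℝ)^((2:ℝ)-b) ≤ (2 * Real.sqrt i)^((2:ℝ)-b) :=
          Real.rpow_le_rpow (Nat.cast_nonneg N) hNle h2b
      _ = 2^((2:ℝ)-b) * (Real.sqrt i)^((2:ℝ)-b) :=
          Real.mul_rpow (by norm_num) (Real.sqrt_nonneg _)
      _ ≤ 4 * (i:ℝ)^(1-b/2) := by
          rw [heq]
          exact mul_le_mul_of_nonneg_right h24 hinn
  have hT1bound : ∑' x, T1 x ≤ (4*K^2*c) * (i:ℝ)^(-(b/2)) := by
    rw [hT1sum, ← Finset.mul_sum]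
    have h1 : ∑ x ∈ box, g x ≤ K^2 * (4 * (i:ℝ)^(1-b/2)) :=
      hboxsum.trans (mul_le_mul_of_nonneg_left hN2b (sq_nonneg K))
    have hrpow : (i:ℝ)^((1:ℝ)-b/2) = (i:ℝ) * (i:ℝ)^(-(b/2)) := by
      rw [show (1:ℝ)-b/2 = 1 + (-(b/2)) by ring, Real.rpow_add hipos, Real.rpow_one]
    have hcinn : (0:ℝ) ≤ c/(i:ℝ) := by positivity
    calc (c/(i:ℝ)) * ∑ x ∈ box, g x
        ≤ (c/(i:ℝ)) * (K^2 * (4 * (i:ℝ)^(1-b/2))) := mul_le_mul_of_nonneg_left h1 hcinn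
      _ = (4*K^2*c) * (i:ℝ)^(-(b/2)) := by
          rw [hrpow]
          field_simp
  have hT2sum : ∑' x, T2 x = (i:ℝ)^(-(b/2)) := by
    rw [hT2]
    dsimp only
    rw [tsum_mul_left, htsum, mul_one]
  calc ∑' x, μx x * g x ≤ ∑' x, (T1 x + T2 x) := Summable.tsum_le_tsum hpoint hSg (hST1.add hST2)
    _ = ∑' x, T1 x + ∑' x, T2 x := Summable.tsum_add hST1 hST2
    _ ≤ (4*K^2*c) * (i:ℝ)^(-(b/2)) + (i:ℝ)^(-(b/2)) := by
        rw [hT2sum]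
        linarith [hT1bound]
    _ = (4*K^2*c+1) * (i:ℝ)^(-(b/2)) := by ring
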